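/- In the symmetric quadratic-equation setup, the matrix H = V_⊥V_⊥ᵀEV satisfies ‖H‖_max ≤ (1 + rμ)·κ/√d. -/

import Mathlib

open Matrix BigOperators

/-- Entrywise max norm: largest absolute value of an entry. -/
noncomputable def matMaxNorm {m n : Type*} [Fintype m] [Fintype n] (M : Matrix m n ℝ) : ℝ :=
  ⨆ i, ⨆ j, |M i j|

/-- Matrix ∞-norm: maximum absolute row sum. -/
noncomputable def matInfNorm {m n : Type*} [Fintype m] [Fintype n] (M : Matrix m n ℝ) : ℝ :=
  ⨆ i, ∑ j, |M i j|

/-- Matrix 1-norm: maximum absolute column sum. -/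
noncomputable def matOneNorm {m n : Type*} [Fintype m] [Fintype n] (M : Matrix m n ℝ) : ℝ :=
  ⨆ j, ∑ i, |M i j|

/-- Euclidean norm of a vector. -/
noncomputable def vec2Norm {n : Type*} [Fintype n] (x : n → ℝ) : ℝ :=
  Real.sqrt (∑ i, (x i) ^ 2)

/-- ℓ∞ norm of a vector. -/
noncomputable def vecSupNorm {n : Type*} [Fintype n] (x : n → ℝ) : ℝ :=
  ⨆ i, |x i|

/-- Spectral norm (operator 2-norm) of a matrix. -/
noncomputable def matSpecNorm {m n : Type*} [Fintype m] [Fintype n] (M : Matrix m n ℝ) : ℝ :=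
  sSup {c : ℝ | ∃ x : n → ℝ, vec2Norm x ≤ 1 ∧ c = vec2Norm (M.mulVec x)}

/-- Coherence of a d × r matrix with orthonormal columns. -/
noncomputable def matCoherence {d r : ℕ} (V : Matrix (Fin d) (Fin r) ℝ) : ℝ :=
  ((d : ℝ) / (r : ℝ)) * ⨆ i, ∑ j, (V i j) ^ 2

/-- The positive semidefinite square root of a matrix (the former `Matrix.PosSemidef.sqrt`). -/
noncomputable def posSemidefSqrt {n : Type*} [Fintype n] [DecidableEq n] {S : Matrix n n ℝ}
    (h : S.PosSemidef) : Matrix n n ℝ :=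
  h.1.eigenvectorUnitary.1 * diagonal ((↑) ∘ Real.sqrt ∘ h.1.eigenvalues) *
    (star h.1.eigenvectorUnitary : Matrix n n ℝ)

/-- Inverse of the positive semidefinite square root of a matrix (junk value otherwise). -/
noncomputable def matInvSqrt {n : Type*} [Fintype n] [DecidableEq n] (S : Matrix n n ℝ) :
    Matrix n n ℝ :=
  letI := Classical.propDecidable
  if h : S.PosSemidef then (posSemidefSqrt h)⁻¹ else 0

/-- Weighted max-norm for matrices with d₁ + d₂ rows. -/
noncomputable def wMaxNorm {d₁ d₂ : ℕ} {n : Type*} [Fintype n]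
    (M : Matrix (Fin d₁ ⊕ Fin d₂) n ℝ) : ℝ :=
  matMaxNorm (Matrix.of fun i j =>
    (Sum.elim (fun _ : Fin d₁ => Real.sqrt d₁) (fun _ : Fin d₂ => Real.sqrt d₂) i) * M i j)

/-- Huber loss with parameter α. -/
noncomputable def huberLoss (α x : ℝ) : ℝ := if |x| ≤ α then x ^ 2 else 2 * α * |x| - α ^ 2


lemma abs_le_matMaxNorm {m n : Type*} [Fintype m] [Fintype n]
    (M : Matrix m n ℝ) (i : m) (j : n) : |M i j| ≤ matMaxNorm M := by
  have h1 : |M i j| ≤ ⨆ j, |M i j| :=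
    le_ciSup (f := fun j => |M i j|) (Set.Finite.bddAbove (Set.finite_range _)) j
  have h2 : (⨆ j, |M i j|) ≤ ⨆ i, ⨆ j, |M i j| :=
    le_ciSup (f := fun i => ⨆ j, |M i j|) (Set.Finite.bddAbove (Set.finite_range _)) i
  exact h1.trans h2

/-- Entrywise bound on H = V⊥V⊥ᵀEV (Lemma A.1 of Fan–Wang–Zhong). -/
theorem H_max_norm_bound
    (d r : ℕ) (hr : 0 < r) (hrd : r ≤ d)
    (A E : Matrix (Fin d) (Fin d) ℝ)
    (hAsymm : Aᵀ = A) (hEsymm : Eᵀ = E)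
    (lam : Fin d → ℝ) (v : Fin d → Fin d → ℝ)
    (heig : ∀ i, A.mulVec (v i) = lam i • v i)
    (hon : ∀ i j, ∑ k, v i k * v j k = if i = j then (1 : ℝ) else 0)
    (hdec : ∀ i j : Fin d, i ≤ j → |lam j| ≤ |lam i|)
    (V : Matrix (Fin d) (Fin r) ℝ)
    (hV : V = Matrix.of fun a k => v (Fin.castLE hrd k) a)
    (Vp : Matrix (Fin d) (Fin (d - r)) ℝ)
    (hVp : Vp = Matrix.of fun (a : Fin d) (k : Fin (d - r)) => v ⟨r + (k : ℕ), by have := k.isLt; omega⟩ a)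
    (Lam₁ : Matrix (Fin r) (Fin r) ℝ)
    (hLam₁ : Lam₁ = Matrix.diagonal fun i => lam (Fin.castLE hrd i))
    (Lam₂ : Matrix (Fin (d - r)) (Fin (d - r)) ℝ)
    (hLam₂ : Lam₂ = Matrix.diagonal fun k : Fin (d - r) =>
      lam ⟨r + (k : ℕ), by have := k.isLt; omega⟩)
    (Ar : Matrix (Fin d) (Fin d) ℝ)
    (hAr : Ar = Matrix.of fun a b => ∑ k : Fin r,
      lam (Fin.castLE hrd k) * v (Fin.castLE hrd k) a * v (Fin.castLE hrd k) b)
    (eps tau kappa mu : ℝ)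
    (heps : eps = matInfNorm (A - Ar))
    (htau : tau = matInfNorm E)
    (hkappa : kappa = Real.sqrt d * matMaxNorm (E * V))
    (hmu : mu = matCoherence V)
    (H : Matrix (Fin d) (Fin r) ℝ) (hH : H = Vp * (Vpᵀ * E * V))
    (L₁ : Matrix (Fin r) (Fin r) ℝ) (hL₁ : L₁ = Lam₁ + Vᵀ * E * V)
    (L₂ : Matrix (Fin d) (Fin d) ℝ) (hL₂ : L₂ = Vp * (Lam₂ + Vpᵀ * E * Vp) * Vpᵀ)
    : matMaxNorm H ≤ (1 + (r : ℝ) * mu) * kappa / Real.sqrt d := by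
  have hd : 0 < d := lt_of_lt_of_le hr hrd
  haveI : Nonempty (Fin d) := ⟨⟨0, hd⟩⟩
  haveI : Nonempty (Fin r) := ⟨⟨0, hr⟩⟩
  set B := matMaxNorm (E * V) with hBdef
  have hB0 : 0 ≤ B := le_trans (abs_nonneg _) (abs_le_matMaxNorm (E * V) ⟨0, hd⟩ ⟨0, hr⟩)
  have hBle : ∀ a j, |(E * V) a j| ≤ B := fun a j => abs_le_matMaxNorm _ a j
  -- rows of v orthonormal implies columns orthonormal
  have hon' : ∀ a b, ∑ i, v i a * v i b = if a = b then (1 : ℝ) else 0 := by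
    have hM : (Matrix.of v) * (Matrix.of v)ᵀ = 1 := by
      ext i j
      simpa [Matrix.mul_apply, Matrix.one_apply] using hon i j
    have hM' : (Matrix.of v)ᵀ * (Matrix.of v) = 1 := mul_eq_one_comm.mp hM
    intro a b
    have := congrArg (fun M : Matrix (Fin d) (Fin d) ℝ => M a b) hM'
    simpa [Matrix.mul_apply, Matrix.one_apply] using this
  -- splitting a sum over Fin d
  have hsplit : ∀ f : Fin d → ℝ, ∑ i, f i =
      (∑ k : Fin r, f (Fin.castLE hrd k)) +
        ∑ k : Fin (d - r), f ⟨r + (k : ℕ), by have := k.isLt; omega⟩ := by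
    intro f
    rw [← Equiv.sum_comp (finSumFinEquiv.trans (finCongr (show r + (d - r) = d by omega))) f,
      Fintype.sum_sum_type]
    congr 1 <;>
      exact Finset.sum_congr rfl fun k _ => congrArg f (Fin.ext (by simp))
  have hVpVp : ∀ a b, ∑ k : Fin (d - r), Vp a k * Vp b k =
      (if a = b then (1 : ℝ) else 0) - ∑ k : Fin r, V a k * V b k := by
    intro a b
    have h := hsplit fun i => v i a * v i b
    rw [hon'] at h
    subst hV hVp
    simp only [Matrix.of_apply]
    linarith [h]
  -- H = E*V - (V*Vᵀ)*(E*V)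
  have hHentry : ∀ i j, H i j =
      (E * V) i j - ∑ a, (∑ k : Fin r, V i k * V a k) * (E * V) a j := by
    intro i j
    have hH' : H = (Vp * Vpᵀ) * (E * V) := by
      rw [hH, Matrix.mul_assoc, Matrix.mul_assoc, ← Matrix.mul_assoc Vpᵀ]
    have hentry : H i j = ∑ a, (∑ k : Fin (d - r), Vp i k * Vp a k) * (E * V) a j := by
      rw [hH', Matrix.mul_apply]
      exact Finset.sum_congr rfl fun a _ => by simp [Matrix.mul_apply]
    rw [hentry]
    have : ∀ a, (∑ k : Fin (d - r), Vp i k * Vp a k) * (E * V) a j =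
        (if i = a then (1 : ℝ) else 0) * (E * V) a j
          - (∑ k : Fin r, V i k * V a k) * (E * V) a j := by
      intro a
      rw [hVpVp i a]
      ring
    rw [Finset.sum_congr rfl fun a _ => this a, Finset.sum_sub_distrib]
    simp [ite_mul, Finset.sum_ite_eq]
  -- row norm bound
  have hrmu : (r : ℝ) * mu / d = ⨆ i, ∑ k, (V i k) ^ 2 := by
    rw [hmu, matCoherence]
    field_simp
  have hrow : ∀ a, ∑ k, (V a k) ^ 2 ≤ (r : ℝ) * mu / d := by
    intro a
    rw [hrmu]
    exact le_ciSup (f := fun i => ∑ k, (V i k) ^ 2)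
      (Set.Finite.bddAbove (Set.finite_range _)) a
  have hc0 : 0 ≤ (r : ℝ) * mu / d :=
    le_trans (Finset.sum_nonneg fun k _ => sq_nonneg _) (hrow ⟨0, hd⟩)
  have hGram : ∀ i a, |∑ k : Fin r, V i k * V a k| ≤ (r : ℝ) * mu / d := by
    intro i a
    have h2 : (∑ k : Fin r, V i k * V a k) ^ 2 ≤ ((r : ℝ) * mu / d) ^ 2 := by
      calc (∑ k : Fin r, V i k * V a k) ^ 2
          ≤ (∑ k, (V i k) ^ 2) * ∑ k, (V a k) ^ 2 :=
            Finset.sum_mul_sq_le_sq_mul_sq _ _ _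
        _ ≤ ((r : ℝ) * mu / d) ^ 2 := by
            rw [sq]
            exact mul_le_mul (hrow i) (hrow a)
              (Finset.sum_nonneg fun k _ => sq_nonneg _) hc0
    calc |∑ k : Fin r, V i k * V a k| = Real.sqrt ((∑ k : Fin r, V i k * V a k) ^ 2) :=
          (Real.sqrt_sq_eq_abs _).symm
      _ ≤ Real.sqrt (((r : ℝ) * mu / d) ^ 2) := Real.sqrt_le_sqrt h2
      _ = (r : ℝ) * mu / d := by rw [Real.sqrt_sq hc0]
  -- entrywise bound on H
  have hHbound : ∀ i j, |H i j| ≤ (1 + (r : ℝ) * mu) * B := by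
    intro i j
    rw [hHentry i j]
    calc |(E * V) i j - ∑ a, (∑ k : Fin r, V i k * V a k) * (E * V) a j|
        ≤ |(E * V) i j| + |∑ a, (∑ k : Fin r, V i k * V a k) * (E * V) a j| :=
          abs_sub _ _
      _ ≤ B + ∑ a, ((r : ℝ) * mu / d) * B := by
          refine add_le_add (hBle i j) ?_
          refine le_trans (Finset.abs_sum_le_sum_abs _ _) (Finset.sum_le_sum fun a _ => ?_)
          rw [abs_mul]
          exact mul_le_mul (hGram i a) (hBle a j) (abs_nonneg _) hc0
      _ = (1 + (r : ℝ) * mu) * B := by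
          rw [Finset.sum_const, Finset.card_univ, Fintype.card_fin]
          have hdne : (d : ℝ) ≠ 0 := Nat.cast_ne_zero.mpr hd.ne'
          field_simp
          ring_nf
          simp [hdne]
  have hmax : matMaxNorm H ≤ (1 + (r : ℝ) * mu) * B := by
    refine ciSup_le fun i => ciSup_le fun j => hHbound i j
  have hsd : (0 : ℝ) < Real.sqrt d := Real.sqrt_pos.mpr (by exact_mod_cast hd)
  have : (1 + (r : ℝ) * mu) * kappa / Real.sqrt d = (1 + (r : ℝ) * mu) * B := by
    rw [hkappa]
    field_simp
  rw [this]
  exact hmax
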